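/- Let k be a commutative ring, d ≥ 0, and let X, Y, Z be finitely generated free k-modules with rank(Y) ≥ d. Then the map Γ^d(Hom(X,Y)) ⊗ Γ^d(Hom(Y,Z)) → Γ^d(Hom(X,Z)) induced by composition (via the diagonal map Γ^d(U) ⊗ Γ^d(V) → Γ^d(U ⊗ V) followed by Γ^d of the composition map) is surjective. -/

import Mathlib

/-!
STATEMENT 0 (key lemma of divided powers, Lemma 2.2 / `lm-key`):
Let `k` be a commutative ring, `d ≥ 0`, and `X, Y, Z` finitely generated free `k`-modules with
`rank Y ≥ d`.  Then the map
`Γ^d(Hom(X,Y)) ⊗ Γ^d(Hom(Y,Z)) → Γ^d(Hom(X,Z))`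
induced by composition (the diagonal map `Γ^d U ⊗ Γ^d V → Γ^d (U ⊗ V)` followed by `Γ^d` of the
composition map) is surjective.  Here `Γ^d V = (V^{⊗ d})^{S_d}`.
We formalize "surjective onto `Γ^d(Hom(X,Z))`" as: the range of the induced map into the ambient
tensor power equals the submodule `Γ^d(Hom(X,Z))`.
-/

open TensorProduct PiTensorProduct

variable (k : Type) [CommRing k]

/-- The action of a permutation `σ ∈ S_d` on the `d`-th tensor power of `V`,
permuting the factors of the tensor product. -/
noncomputable def permTensorMap (d : ℕ) (V : Type) [AddCommGroup V] [Module k V]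
    (σ : Equiv.Perm (Fin d)) :
    (⨂[k] (_ : Fin d), V) →ₗ[k] (⨂[k] (_ : Fin d), V) :=
  (PiTensorProduct.reindex k (fun _ : Fin d => V) σ).toLinearMap

/-- `Γ^d(V)`, the `d`-th divided power of `V`, i.e. the submodule of `S_d`-invariants
`(V^{⊗ d})^{S_d}` of the `d`-th tensor power of `V`. -/
noncomputable def dividedPower (d : ℕ) (V : Type) [AddCommGroup V] [Module k V] :
    Submodule k (⨂[k] (_ : Fin d), V) :=
  ⨅ σ : Equiv.Perm (Fin d), LinearMap.ker (permTensorMap k d V σ - LinearMap.id)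

/-- The map `j_d : (U^{⊗d}) ⊗ (V^{⊗d}) → (U ⊗ V)^{⊗d}` induced by the diagonal inclusion
of `S_d` in `S_d × S_d`. -/
noncomputable def diagTensor (d : ℕ) (U V : Type) [AddCommGroup U] [Module k U]
    [AddCommGroup V] [Module k V] :
    ((⨂[k] (_ : Fin d), U) ⊗[k] (⨂[k] (_ : Fin d), V)) →ₗ[k] ⨂[k] (_ : Fin d), (U ⊗[k] V) :=
  TensorProduct.lift (PiTensorProduct.map₂ (fun _ => TensorProduct.mk k U V))

/-- Composition of linear maps, as a linear map `Hom(X,Y) ⊗ Hom(Y,Z) → Hom(X,Z)`. -/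
noncomputable def compTensor (X Y Z : Type) [AddCommGroup X] [Module k X]
    [AddCommGroup Y] [Module k Y] [AddCommGroup Z] [Module k Z] :
    ((X →ₗ[k] Y) ⊗[k] (Y →ₗ[k] Z)) →ₗ[k] (X →ₗ[k] Z) :=
  TensorProduct.lift (LinearMap.llcomp k X Y Z).flip

/-- The map `Γ^d(Hom(X,Y)) ⊗ Γ^d(Hom(Y,Z)) → Hom(X,Z)^{⊗d}` induced by composition in the
category `Γ^d 𝒱_k` (composing the inclusions of the divided powers with `j_d` and with the
`d`-th tensor power of the composition map). -/
noncomputable def dividedPowerComposition (d : ℕ) (X Y Z : Type) [AddCommGroup X] [Module k X]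
    [AddCommGroup Y] [Module k Y] [AddCommGroup Z] [Module k Z] :
    ((dividedPower k d (X →ₗ[k] Y)) ⊗[k] (dividedPower k d (Y →ₗ[k] Z)))
      →ₗ[k] ⨂[k] (_ : Fin d), (X →ₗ[k] Z) :=
  (PiTensorProduct.map (fun _ => compTensor k X Y Z)) ∘ₗ
    (diagTensor k d (X →ₗ[k] Y) (Y →ₗ[k] Z)) ∘ₗ
      (TensorProduct.map (dividedPower k d (X →ₗ[k] Y)).subtype
        (dividedPower k d (Y →ₗ[k] Z)).subtype)

set_option linter.unusedSectionVars false
section Aux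

variable {k : Type} [CommRing k] {d : ℕ}

theorem mem_dividedPower_iff {V : Type} [AddCommGroup V] [Module k V]
    (x : ⨂[k] (_ : Fin d), V) :
    x ∈ dividedPower k d V ↔ ∀ σ : Equiv.Perm (Fin d),
      (PiTensorProduct.reindex k (fun _ : Fin d => V) σ) x = x := by
  simp [dividedPower, permTensorMap, Submodule.mem_iInf, LinearMap.mem_ker,
    LinearMap.sub_apply, sub_eq_zero]

variable {ι : Type} [Fintype ι] [DecidableEq ι]
variable {V : Type} [AddCommGroup V] [Module k V]

/-- `e (g 0) ⊗ ... ⊗ e (g (d-1))`. -/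
noncomputable def tpow (e : ι → V) (g : Fin d → ι) : ⨂[k] (_ : Fin d), V :=
  PiTensorProduct.tprod k (fun j => e (g j))

/-- The orbit of `f : Fin d → ι` under precomposition with permutations. -/
noncomputable def orbitFinset (f : Fin d → ι) : Finset (Fin d → ι) :=
  Finset.image (fun σ : Equiv.Perm (Fin d) => f ∘ σ) Finset.univ

theorem self_mem_orbitFinset (f : Fin d → ι) : f ∈ orbitFinset f := by
  simpa [orbitFinset] using ⟨1, by funext j; rfl⟩

theorem comp_mem_orbitFinset {f h : Fin d → ι} (hh : h ∈ orbitFinset f)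
    (σ : Equiv.Perm (Fin d)) : h ∘ σ ∈ orbitFinset f := by
  simp only [orbitFinset, Finset.mem_image, Finset.mem_univ, true_and] at hh ⊢
  obtain ⟨τ, rfl⟩ := hh
  exact ⟨τ * σ, by funext j; rfl⟩

theorem mem_orbitFinset_iff {f h : Fin d → ι} :
    h ∈ orbitFinset f ↔ ∃ σ : Equiv.Perm (Fin d), h = f ∘ σ := by
  simp only [orbitFinset, Finset.mem_image, Finset.mem_univ, true_and]
  exact ⟨fun ⟨σ, hs⟩ => ⟨σ, hs.symm⟩, fun ⟨σ, hs⟩ => ⟨σ, hs.symm⟩⟩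

/-- The orbit sum of the pure tensor attached to `f`. -/
noncomputable def orbitSum (e : ι → V) (f : Fin d → ι) : ⨂[k] (_ : Fin d), V :=
  ∑ h ∈ orbitFinset f, tpow (k := k) e h

theorem reindex_tpow (e : ι → V) (h : Fin d → ι) (σ : Equiv.Perm (Fin d)) :
    PiTensorProduct.reindex k (fun _ : Fin d => V) σ (tpow (k := k) e h)
      = tpow (k := k) e (h ∘ σ.symm) := by
  simp [tpow, PiTensorProduct.reindex_tprod]

theorem orbitSum_mem (e : ι → V) (f : Fin d → ι) :
    orbitSum (k := k) e f ∈ dividedPower k d V := by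
  rw [mem_dividedPower_iff]
  intro σ
  rw [orbitSum, map_sum]
  simp_rw [reindex_tpow]
  refine Finset.sum_bij' (fun h _ => h ∘ σ.symm) (fun h _ => h ∘ σ) ?_ ?_ ?_ ?_ ?_
  · intro h hh; exact comp_mem_orbitFinset hh σ.symm
  · intro h hh; exact comp_mem_orbitFinset hh σ
  · intro h _; funext j; simp
  · intro h _; funext j; simp
  · intro h _; rfl

end Aux
section Aux2
set_option linter.unusedSectionVars false

variable {k : Type} [CommRing k] {d : ℕ}
variable {ι : Type} [Fintype ι] [DecidableEq ι]
variable {V : Type} [AddCommGroup V] [Module k V]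

/-- The coefficient functional attached to a family of functionals `ε` and `g : Fin d → ι`. -/
noncomputable def coeffMap (ε : ι → (V →ₗ[k] k)) (g : Fin d → ι) :
    (⨂[k] (_ : Fin d), V) →ₗ[k] k :=
  PiTensorProduct.lift
    ((MultilinearMap.mkPiAlgebra k (Fin d) k).compLinearMap (fun j => ε (g j)))

theorem coeffMap_tprod (ε : ι → (V →ₗ[k] k)) (g : Fin d → ι) (m : Fin d → V) :
    coeffMap ε g (PiTensorProduct.tprod k m) = ∏ j, ε (g j) (m j) := by
  simp [coeffMap]

theorem coeffMap_tpow (e : ι → V) (ε : ι → (V →ₗ[k] k))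
    (hpair : ∀ i i', ε i (e i') = if i = i' then 1 else 0) (g h : Fin d → ι) :
    coeffMap ε g (tpow (k := k) e h) = if g = h then 1 else 0 := by
  rw [tpow, coeffMap_tprod]
  by_cases hgh : g = h
  · subst hgh; simp [hpair]
  · obtain ⟨j, hj⟩ : ∃ j, g j ≠ h j := by
      by_contra hc
      push_neg at hc
      exact hgh (funext hc)
    rw [if_neg hgh]
    exact Finset.prod_eq_zero (Finset.mem_univ j) (by rw [hpair, if_neg hj])

theorem sum_coeffMap_smul (e : ι → V) (ε : ι → (V →ₗ[k] k))
    (hrec : ∀ v : V, ∑ i : ι, ε i v • e i = v) (x : ⨂[k] (_ : Fin d), V) :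
    ∑ g : Fin d → ι, coeffMap ε g x • tpow (k := k) e g = x := by
  induction x using PiTensorProduct.induction_on with
  | smul_tprod r m =>
    simp_rw [map_smul, smul_eq_mul, mul_smul, ← Finset.smul_sum]
    congr 1
    have expand : (PiTensorProduct.tprod k m : ⨂[k] (_ : Fin d), V)
        = ∑ g : Fin d → ι, (∏ j, ε (g j) (m j)) • tpow (k := k) e g := by
      conv_lhs => rw [show m = fun j => ∑ i : ι, ε i (m j) • e i from funext fun j => (hrec (m j)).symm]
      rw [MultilinearMap.map_sum (PiTensorProduct.tprod k) (fun j i => ε i (m j) • e i)]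
      refine Finset.sum_congr rfl fun g _ => ?_
      rw [show (fun j => ε (g j) (m j) • e (g j)) = fun j => (fun j' => ε (g j') (m j')) j • (fun j' => e (g j')) j from rfl]
      rw [MultilinearMap.map_smul_univ]
      rfl
    simp_rw [coeffMap_tprod]
    exact expand.symm
  | add x y hx hy =>
    simp_rw [map_add, add_smul, Finset.sum_add_distrib, hx, hy]

theorem coeffMap_reindex (ε : ι → (V →ₗ[k] k)) (g : Fin d → ι) (σ : Equiv.Perm (Fin d))
    (x : ⨂[k] (_ : Fin d), V) :
    coeffMap ε g (PiTensorProduct.reindex k (fun _ : Fin d => V) σ x)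
      = coeffMap ε (g ∘ σ) x := by
  have : (coeffMap ε g) ∘ₗ (PiTensorProduct.reindex k (fun _ : Fin d => V) σ).toLinearMap
      = coeffMap (k := k) ε (g ∘ σ) := by
    apply PiTensorProduct.ext
    apply MultilinearMap.ext
    intro m
    simp only [LinearMap.compMultilinearMap_apply, LinearMap.comp_apply, LinearEquiv.coe_coe,
      PiTensorProduct.reindex_tprod, coeffMap_tprod]
    exact (Fintype.prod_equiv σ (fun j => ε (g (σ j)) (m j))
      (fun j => ε (g j) (m (σ.symm j))) (fun x => by simp)).symm
  exact DFunLike.congr_fun this x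

end Aux2
section Aux3
set_option linter.unusedSectionVars false

variable {k : Type} [CommRing k] {d : ℕ}
variable {ι : Type} [Fintype ι] [DecidableEq ι]
variable {V : Type} [AddCommGroup V] [Module k V]

theorem coeffMap_orbitSum (e : ι → V) (ε : ι → (V →ₗ[k] k))
    (hpair : ∀ i i', ε i (e i') = if i = i' then 1 else 0) (g f : Fin d → ι) :
    coeffMap ε g (orbitSum (k := k) e f) = if g ∈ orbitFinset f then 1 else 0 := by
  classical
  rw [orbitSum, map_sum]
  simp_rw [coeffMap_tpow e ε hpair]
  exact Finset.sum_ite_eq (orbitFinset f) g (fun _ => (1 : k))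

theorem coeffMap_eq_of_invariant (ε : ι → (V →ₗ[k] k)) {x : ⨂[k] (_ : Fin d), V}
    (hx : x ∈ dividedPower k d V) (g : Fin d → ι) (σ : Equiv.Perm (Fin d)) :
    coeffMap ε (g ∘ σ) x = coeffMap ε g x := by
  rw [← coeffMap_reindex ε g σ x, (mem_dividedPower_iff x).1 hx σ]

theorem dividedPower_le_span_orbitSum (e : ι → V) (ε : ι → (V →ₗ[k] k))
    (hpair : ∀ i i', ε i (e i') = if i = i' then 1 else 0)
    (hrec : ∀ v : V, ∑ i : ι, ε i v • e i = v) :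
    dividedPower k d V ≤ Submodule.span k (Set.range (orbitSum (k := k) e)) := by
  classical
  suffices H : ∀ (n : ℕ) (x : ⨂[k] (_ : Fin d), V), x ∈ dividedPower k d V →
      (Finset.univ.filter fun g : Fin d → ι => coeffMap ε g x ≠ 0).card ≤ n →
      x ∈ Submodule.span k (Set.range (orbitSum (k := k) e)) by
    intro x hx
    exact H _ x hx le_rfl
  intro n
  induction n with
  | zero =>
    intro x hx hcard
    have hzero : ∀ g : Fin d → ι, coeffMap ε g x = 0 := by
      intro g
      by_contra hg
      have : g ∈ Finset.univ.filter fun g : Fin d → ι => coeffMap ε g x ≠ 0 := by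
        simp [hg]
      simpa [Finset.card_eq_zero.1 (Nat.le_zero.1 hcard)] using this
    have : x = 0 := by
      rw [← sum_coeffMap_smul e ε hrec x]
      simp [hzero]
    rw [this]; exact Submodule.zero_mem _
  | succ n ih =>
    intro x hx hcard
    by_cases hex : ∃ g0 : Fin d → ι, coeffMap ε g0 x ≠ 0
    · obtain ⟨g0, hg0⟩ := hex
      set c : k := coeffMap ε g0 x with hc
      set y : ⨂[k] (_ : Fin d), V := x - c • orbitSum (k := k) e g0 with hy
      have hymem : y ∈ dividedPower k d V :=
        Submodule.sub_mem _ hx (Submodule.smul_mem _ c (orbitSum_mem e g0))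
      have hcoeffy : ∀ h : Fin d → ι,
          coeffMap ε h y = if h ∈ orbitFinset g0 then 0 else coeffMap ε h x := by
        intro h
        rw [hy, map_sub, map_smul, coeffMap_orbitSum e ε hpair, smul_eq_mul]
        by_cases hh : h ∈ orbitFinset g0
        · obtain ⟨σ, rfl⟩ := mem_orbitFinset_iff.1 hh
          rw [if_pos hh, if_pos hh, coeffMap_eq_of_invariant ε hx g0 σ, ← hc]
          ring
        · rw [if_neg hh, if_neg hh, mul_zero, sub_zero]
      have hsubset : (Finset.univ.filter fun g : Fin d → ι => coeffMap ε g y ≠ 0)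
          ⊆ (Finset.univ.filter fun g : Fin d → ι => coeffMap ε g x ≠ 0).erase g0 := by
        intro h hh
        simp only [Finset.mem_filter, Finset.mem_univ, true_and] at hh
        rw [hcoeffy h] at hh
        by_cases hho : h ∈ orbitFinset g0
        · exact absurd hh (by simp [hho])
        · rw [if_neg hho] at hh
          refine Finset.mem_erase.2 ⟨?_, by simp [hh]⟩
          exact fun hgg => hho (hgg ▸ self_mem_orbitFinset g0)
      have hcardy : (Finset.univ.filter fun g : Fin d → ι => coeffMap ε g y ≠ 0).card ≤ n := by
        have h1 : g0 ∈ Finset.univ.filter fun g : Fin d → ι => coeffMap ε g x ≠ 0 := by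
          simpa [hc] using hg0
        calc (Finset.univ.filter fun g : Fin d → ι => coeffMap ε g y ≠ 0).card
            ≤ ((Finset.univ.filter fun g : Fin d → ι => coeffMap ε g x ≠ 0).erase g0).card :=
              Finset.card_le_card hsubset
          _ = (Finset.univ.filter fun g : Fin d → ι => coeffMap ε g x ≠ 0).card - 1 :=
              Finset.card_erase_of_mem h1
          _ ≤ n := by omega
      have hyspan := ih y hymem hcardy
      have hxy : x = y + c • orbitSum (k := k) e g0 := by rw [hy]; abel
      rw [hxy]
      exact Submodule.add_mem _ hyspan
        (Submodule.smul_mem _ c (Submodule.subset_span ⟨g0, rfl⟩))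
    · push_neg at hex
      have : x = 0 := by
        rw [← sum_coeffMap_smul e ε hrec x]
        simp [hex]
      rw [this]; exact Submodule.zero_mem _

end Aux3
section Aux4
set_option linter.unusedSectionVars false
set_option synthInstance.maxHeartbeats 1000000
set_option maxHeartbeats 1000000

variable {k : Type} [CommRing k] {d : ℕ}

theorem compTensor_tmul {X Y Z : Type} [AddCommGroup X] [Module k X]
    [AddCommGroup Y] [Module k Y] [AddCommGroup Z] [Module k Z]
    (f : X →ₗ[k] Y) (g : Y →ₗ[k] Z) :
    compTensor k X Y Z (f ⊗ₜ[k] g) = g ∘ₗ f := by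
  simp only [compTensor, TensorProduct.lift.tmul, LinearMap.flip_apply]
  rfl

theorem diagTensor_tmul_tprod {U V : Type} [AddCommGroup U] [Module k U]
    [AddCommGroup V] [Module k V] (m : Fin d → U) (n : Fin d → V) :
    diagTensor k d U V ((PiTensorProduct.tprod k m) ⊗ₜ[k] (PiTensorProduct.tprod k n))
      = PiTensorProduct.tprod k (fun j => m j ⊗ₜ[k] n j) := by
  simp [diagTensor, PiTensorProduct.map₂_tprod_tprod]

theorem diagTensor_reindex {U V : Type} [AddCommGroup U] [Module k U]
    [AddCommGroup V] [Module k V] (σ : Equiv.Perm (Fin d))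
    (u : ⨂[k] (_ : Fin d), U) (v : ⨂[k] (_ : Fin d), V) :
    diagTensor k d U V ((PiTensorProduct.reindex k (fun _ : Fin d => U) σ u)
        ⊗ₜ[k] (PiTensorProduct.reindex k (fun _ : Fin d => V) σ v))
      = PiTensorProduct.reindex k (fun _ : Fin d => U ⊗[k] V) σ
          (diagTensor k d U V (u ⊗ₜ[k] v)) := by
  have key : (diagTensor k d U V) ∘ₗ
      (TensorProduct.map (PiTensorProduct.reindex k (fun _ : Fin d => U) σ).toLinearMap
        (PiTensorProduct.reindex k (fun _ : Fin d => V) σ).toLinearMap)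
      = (PiTensorProduct.reindex k (fun _ : Fin d => U ⊗[k] V) σ).toLinearMap ∘ₗ
          diagTensor k d U V := by
    apply TensorProduct.ext
    apply PiTensorProduct.ext
    apply MultilinearMap.ext
    intro m
    apply PiTensorProduct.ext
    apply MultilinearMap.ext
    intro n
    simp only [LinearMap.compMultilinearMap_apply, LinearMap.compr₂_apply, LinearMap.compr₂ₛₗ_apply,
      TensorProduct.mk_apply, TensorProduct.map_tmul, LinearMap.comp_apply,
      LinearEquiv.coe_coe]
    rw [PiTensorProduct.reindex_tprod, PiTensorProduct.reindex_tprod,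
      diagTensor_tmul_tprod, diagTensor_tmul_tprod, PiTensorProduct.reindex_tprod]
  have := DFunLike.congr_fun key (u ⊗ₜ[k] v)
  simpa using this

theorem dividedPowerComposition_mem {X Y Z : Type} [AddCommGroup X] [Module k X]
    [AddCommGroup Y] [Module k Y] [AddCommGroup Z] [Module k Z]
    (t : (dividedPower k d (X →ₗ[k] Y)) ⊗[k] (dividedPower k d (Y →ₗ[k] Z))) :
    dividedPowerComposition k d X Y Z t ∈ dividedPower k d (X →ₗ[k] Z) := by
  induction t using TensorProduct.induction_on with
  | zero => rw [map_zero]; exact Submodule.zero_mem _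
  | add a b ha hb => rw [map_add]; exact Submodule.add_mem _ ha hb
  | tmul a b =>
    have hformula : dividedPowerComposition k d X Y Z (a ⊗ₜ[k] b)
        = PiTensorProduct.map (fun _ => compTensor k X Y Z)
            (diagTensor k d (X →ₗ[k] Y) (Y →ₗ[k] Z) ((a : ⨂[k] (_ : Fin d), X →ₗ[k] Y)
              ⊗ₜ[k] (b : ⨂[k] (_ : Fin d), Y →ₗ[k] Z))) := by
      simp [dividedPowerComposition, TensorProduct.map_tmul]
    rw [hformula, mem_dividedPower_iff]
    intro σ
    rw [← PiTensorProduct.map_reindex (fun _ => compTensor k X Y Z) σ, ← diagTensor_reindex,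
      (mem_dividedPower_iff _).1 a.2 σ, (mem_dividedPower_iff _).1 b.2 σ]

end Aux4
section Aux5
set_option linter.unusedSectionVars false
set_option synthInstance.maxHeartbeats 1000000
set_option maxHeartbeats 1000000

variable {k : Type} [CommRing k] {d : ℕ}
variable {X Y Z : Type} [AddCommGroup X] [Module k X]
  [AddCommGroup Y] [Module k Y] [AddCommGroup Z] [Module k Z]
variable {ι : Type} [Fintype ι] [DecidableEq ι]

theorem mem_of_mem_orbitFinset {S : Finset ι} {f : Fin d → ι} (hfS : ∀ j, f j ∈ S)
    {u : Fin d → ι} (hu : u ∈ orbitFinset f) (j : Fin d) : u j ∈ S := by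
  obtain ⟨σ, rfl⟩ := mem_orbitFinset_iff.1 hu
  exact hfS (σ j)

theorem dividedPowerComposition_orbitSum_tmul
    (a : ι → (X →ₗ[k] Y)) (b : ι → (Y →ₗ[k] Z)) (e : ι → (X →ₗ[k] Z))
    (S : Finset ι) (f : Fin d → ι) (hfS : ∀ j, f j ∈ S)
    (hcomp : ∀ i ∈ S, ∀ i' ∈ S, (b i') ∘ₗ (a i) = if i = i' then e i else 0)
    (hA : orbitSum (k := k) a f ∈ dividedPower k d (X →ₗ[k] Y))
    (hB : orbitSum (k := k) b f ∈ dividedPower k d (Y →ₗ[k] Z)) :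
    dividedPowerComposition k d X Y Z
        ((⟨orbitSum (k := k) a f, hA⟩ : dividedPower k d (X →ₗ[k] Y))
          ⊗ₜ[k] (⟨orbitSum (k := k) b f, hB⟩ : dividedPower k d (Y →ₗ[k] Z)))
      = orbitSum (k := k) e f := by
  have hformula : dividedPowerComposition k d X Y Z
      ((⟨orbitSum (k := k) a f, hA⟩ : dividedPower k d (X →ₗ[k] Y))
        ⊗ₜ[k] (⟨orbitSum (k := k) b f, hB⟩ : dividedPower k d (Y →ₗ[k] Z)))
      = PiTensorProduct.map (fun _ => compTensor k X Y Z)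
          (diagTensor k d (X →ₗ[k] Y) (Y →ₗ[k] Z)
            ((orbitSum (k := k) a f) ⊗ₜ[k] (orbitSum (k := k) b f))) := by
    simp [dividedPowerComposition, TensorProduct.map_tmul]
  rw [hformula, orbitSum, orbitSum, TensorProduct.sum_tmul]
  simp only [TensorProduct.tmul_sum, map_sum]
  have expand : ∀ u v : Fin d → ι,
      PiTensorProduct.map (fun _ => compTensor k X Y Z)
        (diagTensor k d (X →ₗ[k] Y) (Y →ₗ[k] Z)
          ((tpow (k := k) a u) ⊗ₜ[k] (tpow (k := k) b v)))
      = PiTensorProduct.tprod k (fun j => (b (v j)) ∘ₗ (a (u j))) := by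
    intro u v
    rw [tpow, tpow, diagTensor_tmul_tprod, PiTensorProduct.map_tprod]
    simp_rw [compTensor_tmul]
  have hval : ∀ u ∈ orbitFinset f, ∀ v ∈ orbitFinset f,
      (PiTensorProduct.tprod k (fun j => (b (v j)) ∘ₗ (a (u j))) : ⨂[k] (_ : Fin d), X →ₗ[k] Z)
        = if u = v then tpow (k := k) e u else 0 := by
    intro u hu v hv
    by_cases huv : u = v
    · subst huv
      rw [if_pos rfl, tpow]
      congr 1
      funext j
      rw [hcomp (u j) (mem_of_mem_orbitFinset hfS hu j) (u j)
        (mem_of_mem_orbitFinset hfS hu j), if_pos rfl]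
    · obtain ⟨j, hj⟩ : ∃ j, u j ≠ v j := by
        by_contra hc
        push_neg at hc
        exact huv (funext hc)
      rw [if_neg huv]
      refine (PiTensorProduct.tprod k).map_coord_zero j ?_
      rw [hcomp (u j) (mem_of_mem_orbitFinset hfS hu j) (v j)
        (mem_of_mem_orbitFinset hfS hv j), if_neg hj]
  calc ∑ u ∈ orbitFinset f, ∑ v ∈ orbitFinset f,
        PiTensorProduct.map (fun _ => compTensor k X Y Z)
          (diagTensor k d (X →ₗ[k] Y) (Y →ₗ[k] Z)
            ((tpow (k := k) a u) ⊗ₜ[k] (tpow (k := k) b v)))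
      = ∑ u ∈ orbitFinset f, ∑ v ∈ orbitFinset f,
          (if u = v then tpow (k := k) e u else 0) := by
        refine Finset.sum_congr rfl fun u hu => Finset.sum_congr rfl fun v hv => ?_
        rw [expand, hval u hu v hv]
    _ = ∑ u ∈ orbitFinset f, tpow (k := k) e u := by
        refine Finset.sum_congr rfl fun u hu => ?_
        rw [Finset.sum_ite_eq (orbitFinset f) u (fun _ => tpow (k := k) e u), if_pos hu]
    _ = orbitSum (k := k) e f := rfl

/-- The rank-one maps attached to bases, a "basis" of the Hom space. -/
noncomputable def homFam {ι₁ ι₂ : Type} (b₁ : Module.Basis ι₁ k X) (b₂ : Module.Basis ι₂ k Z)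
    (i : ι₁ × ι₂) : X →ₗ[k] Z :=
  (b₁.coord i.1).smulRight (b₂ i.2)

/-- The dual family to `homFam`. -/
noncomputable def homDualFam {ι₁ ι₂ : Type} (b₁ : Module.Basis ι₁ k X) (b₂ : Module.Basis ι₂ k Z)
    (i : ι₁ × ι₂) : (X →ₗ[k] Z) →ₗ[k] k :=
  (b₂.coord i.2) ∘ₗ ((LinearMap.applyₗ (b₁ i.1)) : (X →ₗ[k] Z) →ₗ[k] Z)

theorem homDualFam_apply {ι₁ ι₂ : Type} (b₁ : Module.Basis ι₁ k X) (b₂ : Module.Basis ι₂ k Z)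
    (i : ι₁ × ι₂) (φ : X →ₗ[k] Z) :
    homDualFam b₁ b₂ i φ = b₂.repr (φ (b₁ i.1)) i.2 := rfl

theorem homFam_apply_basis {ι₁ ι₂ : Type} [DecidableEq ι₁] (b₁ : Module.Basis ι₁ k X)
    (b₂ : Module.Basis ι₂ k Z) (i : ι₁ × ι₂) (a : ι₁) :
    homFam b₁ b₂ i (b₁ a) = if i.1 = a then b₂ i.2 else 0 := by
  rw [homFam, LinearMap.smulRight_apply, Module.Basis.coord_apply, Module.Basis.repr_self,
    Finsupp.single_apply]
  by_cases h : a = i.1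
  · simp [h]
  · simp [h, Ne.symm h]

theorem homDualFam_homFam {ι₁ ι₂ : Type} [DecidableEq ι₁] [DecidableEq ι₂]
    (b₁ : Module.Basis ι₁ k X) (b₂ : Module.Basis ι₂ k Z) (i i' : ι₁ × ι₂) :
    homDualFam b₁ b₂ i (homFam b₁ b₂ i') = if i = i' then 1 else 0 := by
  rw [homDualFam_apply, homFam_apply_basis]
  by_cases h1 : i'.1 = i.1 <;> by_cases h2 : i'.2 = i.2
  · rw [if_pos h1, Module.Basis.repr_self, Finsupp.single_apply, if_pos h2,
      if_pos (Prod.ext h1.symm h2.symm)]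
  · rw [if_pos h1, Module.Basis.repr_self, Finsupp.single_apply, if_neg h2,
      if_neg (fun hc => h2 (congrArg Prod.snd hc).symm)]
  · rw [if_neg h1, map_zero, Finsupp.coe_zero, Pi.zero_apply,
      if_neg (fun hc => h1 (congrArg Prod.fst hc).symm)]
  · rw [if_neg h1, map_zero, Finsupp.coe_zero, Pi.zero_apply,
      if_neg (fun hc => h1 (congrArg Prod.fst hc).symm)]

theorem sum_homDualFam_smul {ι₁ ι₂ : Type} [Fintype ι₁] [Fintype ι₂]
    [DecidableEq ι₁] [DecidableEq ι₂]
    (b₁ : Module.Basis ι₁ k X) (b₂ : Module.Basis ι₂ k Z) (φ : X →ₗ[k] Z) :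
    ∑ i : ι₁ × ι₂, homDualFam b₁ b₂ i φ • homFam b₁ b₂ i = φ := by
  apply b₁.ext
  intro a
  rw [LinearMap.sum_apply, Fintype.sum_prod_type]
  have inner : ∀ a' : ι₁,
      ∑ c : ι₂, (homDualFam b₁ b₂ (a', c) φ • homFam b₁ b₂ (a', c)) (b₁ a)
        = if a' = a then φ (b₁ a) else 0 := by
    intro a'
    by_cases ha : a' = a
    · subst ha
      rw [if_pos rfl]
      have hterm : ∀ c : ι₂, (homDualFam b₁ b₂ (a', c) φ • homFam b₁ b₂ (a', c)) (b₁ a')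
          = b₂.repr (φ (b₁ a')) c • b₂ c := by
        intro c
        rw [LinearMap.smul_apply, homFam_apply_basis, if_pos rfl, homDualFam_apply]
      rw [Finset.sum_congr rfl (fun c _ => hterm c)]
      exact b₂.sum_repr (φ (b₁ a'))
    · rw [if_neg ha]
      refine Finset.sum_eq_zero fun c _ => ?_
      rw [LinearMap.smul_apply, homFam_apply_basis, if_neg ha, smul_zero]
  rw [Finset.sum_congr rfl (fun a' _ => inner a'),
    Finset.sum_ite_eq' Finset.univ a (fun _ => φ (b₁ a)), if_pos (Finset.mem_univ a)]

end Aux5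
section Aux6
set_option linter.unusedSectionVars false
set_option synthInstance.maxHeartbeats 1000000
set_option maxHeartbeats 1000000

variable {k : Type} [CommRing k] {d : ℕ}
variable {X Y Z : Type} [AddCommGroup X] [Module k X]
  [AddCommGroup Y] [Module k Y] [AddCommGroup Z] [Module k Z]
variable {ιX ιY ιZ : Type}

/-- The family of maps `X → Y` used to factor a given orbit sum. -/
noncomputable def aFam [DecidableEq (ιX × ιZ)] (bX : Module.Basis ιX k X) (bY : Module.Basis ιY k Y)
    (S : Finset (ιX × ιZ)) (emb : ↥S ↪ ιY) (i : ιX × ιZ) : X →ₗ[k] Y :=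
  if h : i ∈ S then (bX.coord i.1).smulRight (bY (emb ⟨i, h⟩)) else 0

/-- The family of maps `Y → Z` used to factor a given orbit sum. -/
noncomputable def bFam [DecidableEq (ιX × ιZ)] (bY : Module.Basis ιY k Y) (bZ : Module.Basis ιZ k Z)
    (S : Finset (ιX × ιZ)) (emb : ↥S ↪ ιY) (i : ιX × ιZ) : Y →ₗ[k] Z :=
  if h : i ∈ S then (bY.coord (emb ⟨i, h⟩)).smulRight (bZ i.2) else 0

theorem bFam_comp_aFam [DecidableEq (ιX × ιZ)] [DecidableEq ιY]
    (bX : Module.Basis ιX k X) (bY : Module.Basis ιY k Y) (bZ : Module.Basis ιZ k Z)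
    (S : Finset (ιX × ιZ)) (emb : ↥S ↪ ιY) {i i' : ιX × ιZ} (hi : i ∈ S) (hi' : i' ∈ S) :
    (bFam bY bZ S emb i') ∘ₗ (aFam bX bY S emb i)
      = if i = i' then homFam bX bZ i else 0 := by
  rw [aFam, bFam, dif_pos hi, dif_pos hi']
  by_cases hii : i = i'
  · subst hii
    rw [if_pos rfl]
    apply LinearMap.ext
    intro x
    simp [homFam, Module.Basis.repr_self]
  · have hemb : ¬(emb ⟨i, hi⟩ = emb ⟨i', hi'⟩) := fun hEq =>
      hii (Subtype.mk_eq_mk.1 (emb.injective hEq))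
    rw [if_neg hii]
    apply LinearMap.ext
    intro x
    simp [Module.Basis.repr_self, Finsupp.single_apply, hemb]

theorem orbitSum_homFam_mem_range [Fintype ιX] [Fintype ιY] [Fintype ιZ]
    [DecidableEq ιX] [DecidableEq ιY] [DecidableEq ιZ]
    (bX : Module.Basis ιX k X) (bY : Module.Basis ιY k Y) (bZ : Module.Basis ιZ k Z)
    (hcard : d ≤ Fintype.card ιY) (f : Fin d → ιX × ιZ) :
    orbitSum (k := k) (homFam bX bZ) f
      ∈ LinearMap.range (dividedPowerComposition k d X Y Z) := by
  classical
  have hfS : ∀ j, f j ∈ Finset.image f Finset.univ :=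
    fun j => Finset.mem_image_of_mem f (Finset.mem_univ j)
  have hc2 : Fintype.card ↥(Finset.image f Finset.univ) ≤ Fintype.card ιY := by
    rw [Fintype.card_coe]
    refine le_trans (le_trans Finset.card_image_le ?_) hcard
    simp
  obtain ⟨emb⟩ := Function.Embedding.nonempty_of_card_le hc2
  refine ⟨(⟨orbitSum (k := k) (aFam bX bY _ emb) f, orbitSum_mem _ _⟩ :
      dividedPower k d (X →ₗ[k] Y))
    ⊗ₜ[k] (⟨orbitSum (k := k) (bFam bY bZ _ emb) f, orbitSum_mem _ _⟩ :
      dividedPower k d (Y →ₗ[k] Z)), ?_⟩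
  exact dividedPowerComposition_orbitSum_tmul _ _ _ _ f hfS
    (fun i hi i' hi' => bFam_comp_aFam bX bY bZ _ emb hi hi') _ _

end Aux6
set_option synthInstance.maxHeartbeats 1000000 in
set_option maxHeartbeats 1000000 in
/-- **Key lemma.**  If `X, Y, Z` are finitely generated free `k`-modules and `rank Y ≥ d`, then
the composition map `Γ^d(Hom(X,Y)) ⊗ Γ^d(Hom(Y,Z)) → Γ^d(Hom(X,Z))` is surjective, i.e. the
range of the induced map into the ambient tensor power is exactly `Γ^d(Hom(X,Z))`. -/
theorem statement0 (d : ℕ) (X Y Z : Type)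
    [AddCommGroup X] [Module k X] [Module.Free k X] [Module.Finite k X]
    [AddCommGroup Y] [Module k Y] [Module.Free k Y] [Module.Finite k Y]
    [AddCommGroup Z] [Module k Z] [Module.Free k Z] [Module.Finite k Z]
    (hY : d ≤ Module.finrank k Y) :
    LinearMap.range (dividedPowerComposition k d X Y Z)
      = dividedPower k d (X →ₗ[k] Z) := by
  classical
  rcases subsingleton_or_nontrivial k with hk | hk
  · haveI := Module.subsingleton k (⨂[k] (_ : Fin d), X →ₗ[k] Z)
    apply Submodule.ext
    intro x
    rw [Subsingleton.elim x 0]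
    simp [Submodule.zero_mem]
  apply le_antisymm
  · intro x hx
    obtain ⟨t, rfl⟩ := LinearMap.mem_range.1 hx
    exact dividedPowerComposition_mem t
  · have bX := Module.Free.chooseBasis k X
    have bY := Module.Free.chooseBasis k Y
    have bZ := Module.Free.chooseBasis k Z
    refine le_trans (dividedPower_le_span_orbitSum (homFam bX bZ) (homDualFam bX bZ)
      (homDualFam_homFam bX bZ) (sum_homDualFam_smul bX bZ)) (Submodule.span_le.2 ?_)
    rintro w ⟨f, rfl⟩
    exact orbitSum_homFam_mem_range bX bY bZ
      (hY.trans_eq (Module.finrank_eq_card_chooseBasisIndex k Y)) f
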